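/- arXiv:2401.04179 — 2 statements merged into one kernel-verified Lean document; each statement's English description precedes it below -/
import Mathlib

section
/- Let x₀ > 0, let q ∈ ℕ with q ≥ 1, and let N ∈ ℕ with N ≥ q. Then there exist rational numbers d₀, …, d_{N−1} (depending only on N and q) such that for every x > 0: (−1)^N · I_N[t ↦ t^(−q)](x) = ( (−1)^(N+1−q) / ( (q−1)! · (N−q)! ) ) · x^(N−q) · log(x/x₀) − x₀^(N−q) · Σ_{i=0}^{N−1} d_i · ( 1 − x/x₀ )^i. (This is Lemma B.6, eq. (B.10): for integer q in the supercritical range the N-fold iterated primitive of t^(−q) based at x₀ produces a logarithm with the stated explicit coefficient.) -/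
noncomputable section

/-- Iterated primitives based at `x₀`: `I₀[f] = f` and
`I_{k+1}[f](x) = ∫_{x₀}^{x} I_k[f](t) dt`. -/
def iterPrim (x₀ : ℝ) : ℕ → (ℝ → ℝ) → ℝ → ℝ
  | 0, f => f
  | k + 1, f => fun x => ∫ t in x₀..x, iterPrim x₀ k f t

lemma uIcc_pos {a b t : ℝ} (ha : 0 < a) (hb : 0 < b) (ht : t ∈ Set.uIcc a b) : 0 < t := by
  rcases Set.mem_uIcc.mp ht with ⟨h1,h2⟩|⟨h1,h2⟩ <;> linarith

lemma iterPrim_scale (q : ℕ) {x₀ : ℝ} (hx₀ : 0 < x₀) (k : ℕ) :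
    ∀ x : ℝ, 0 < x →
      iterPrim x₀ k (fun t => t ^ (-(q:ℤ))) x
        = x₀ ^ ((k:ℤ) - q) * iterPrim 1 k (fun t => t ^ (-(q:ℤ))) (x / x₀) := by
  induction k with
  | zero =>
    intro x hx
    simp only [iterPrim, Nat.cast_zero, zero_sub]
    rw [div_zpow]
    field_simp
  | succ k ih =>
    intro x hx
    have h1 : iterPrim x₀ (k+1) (fun t => t ^ (-(q:ℤ))) x
        = ∫ t in x₀..x, iterPrim x₀ k (fun t => t ^ (-(q:ℤ))) t := rfl
    have h2 : iterPrim 1 (k+1) (fun t => t ^ (-(q:ℤ))) (x/x₀)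
        = ∫ s in (1:ℝ)..(x/x₀), iterPrim 1 k (fun t => t ^ (-(q:ℤ))) s := rfl
    rw [h1, h2]
    rw [intervalIntegral.integral_congr
      (g := fun t => x₀ ^ ((k:ℤ) - q) * iterPrim 1 k (fun t => t ^ (-(q:ℤ))) (t / x₀))
      (fun t ht => ih t (uIcc_pos hx₀ hx ht))]
    rw [intervalIntegral.integral_const_mul]
    rw [intervalIntegral.integral_comp_div (fun s => iterPrim 1 k (fun t => t ^ (-(q:ℤ))) s) hx₀.ne']
    rw [div_self hx₀.ne', smul_eq_mul, ← mul_assoc]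
    congr 1
    rw [mul_comm, show (((k+1:ℕ)):ℤ) - (q:ℤ) = 1 + ((k:ℤ) - q) by push_cast; ring,
      zpow_add₀ hx₀.ne', zpow_one]

def ratCons (c : ℚ) (b : ℕ → ℚ) : ℕ → ℚ
  | 0 => c
  | (i+1) => b i

@[simp] lemma ratCons_zero (c : ℚ) (b : ℕ → ℚ) : ratCons c b 0 = c := rfl
@[simp] lemma ratCons_succ (c : ℚ) (b : ℕ → ℚ) (i : ℕ) : ratCons c b (i+1) = b i := rfl

lemma stage1 (q : ℕ) (hq : 1 ≤ q) :
    ∀ k, k ≤ q - 1 →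
    ∃ b : ℕ → ℚ, ∀ y : ℝ, 0 < y →
      iterPrim 1 k (fun t => t ^ (-(q:ℤ))) y =
        ((((-1)^k * ((q-1-k).factorial : ℚ) / ((q-1).factorial : ℚ)) : ℚ) : ℝ)
            * y ^ (-((q:ℤ) - (k:ℤ)))
          + ∑ i ∈ Finset.range k, (b i : ℝ) * y ^ i := by
  intro k
  induction k with
  | zero =>
    intro _
    refine ⟨0, fun y hy => ?_⟩
    have h1 : (((-1:ℚ))^0 * ((q-1-0).factorial : ℚ) / ((q-1).factorial : ℚ)) = 1 := by
      rw [pow_zero, one_mul, Nat.sub_zero,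
        div_self (Nat.cast_ne_zero.mpr (Nat.factorial_ne_zero _))]
    rw [h1]
    simp [iterPrim]
  | succ k ih =>
    intro hk
    obtain ⟨b, hb⟩ := ih (by omega)
    set A : ℚ := (-1)^k * ((q-1-k).factorial : ℚ) / ((q-1).factorial : ℚ) with hA
    set m : ℕ := q - 1 - k with hm
    have hm1 : 1 ≤ m := by omega
    have hmq : ((q:ℤ) - (k:ℤ)) = (m:ℤ) + 1 := by omega
    have hmq' : ((q:ℤ) - ((k:ℕ)+1:ℕ)) = (m:ℤ) := by push_cast; omega
    set c0 : ℚ := -(A / (-(m:ℚ)) + ∑ i ∈ Finset.range k, b i / (i+1)) with hc0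
    refine ⟨ratCons c0 (fun i => b i / (i+1)), fun y hy => ?_⟩
    set G : ℝ → ℝ := fun t => (A:ℝ) / (-(m:ℝ)) * t ^ (-(m:ℤ))
        + ∑ i ∈ Finset.range k, (b i:ℝ)/((i:ℝ)+1) * t^(i+1) with hG
    set F : ℝ → ℝ := fun t => (A:ℝ) * t ^ (-((q:ℤ) - (k:ℤ)))
        + ∑ i ∈ Finset.range k, (b i : ℝ) * t ^ i with hF
    have hderiv : ∀ t ∈ Set.uIcc (1:ℝ) y, HasDerivAt G (F t) t := by
      intro t ht
      have ht0 : 0 < t := uIcc_pos one_pos hy ht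
      have h1 : HasDerivAt (fun t : ℝ => (A:ℝ) / (-(m:ℝ)) * t ^ (-(m:ℤ)))
          ((A:ℝ) * t ^ (-((q:ℤ) - (k:ℤ)))) t := by
        have h := (hasDerivAt_zpow (-(m:ℤ)) t (Or.inl ht0.ne')).const_mul ((A:ℝ) / (-(m:ℝ)))
        refine h.congr_deriv ?_
        rw [hmq, show (-(m:ℤ)) - 1 = -((m:ℤ)+1) by ring]
        have hm0 : (m:ℝ) ≠ 0 := Nat.cast_ne_zero.mpr (by omega)
        push_cast
        field_simp
      have h2 : HasDerivAt (fun t : ℝ => ∑ i ∈ Finset.range k, (b i:ℝ)/((i:ℝ)+1) * t^(i+1))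
          (∑ i ∈ Finset.range k, (b i : ℝ) * t ^ i) t := by
        refine HasDerivAt.fun_sum fun i _ => ?_
        have h := (hasDerivAt_pow (i+1) t).const_mul ((b i:ℝ)/((i:ℝ)+1))
        refine h.congr_deriv ?_
        have : ((i:ℝ)+1) ≠ 0 := by positivity
        push_cast
        field_simp
      exact h1.add h2
    have hint : IntervalIntegrable F MeasureTheory.volume 1 y := by
      apply ContinuousOn.intervalIntegrable
      apply ContinuousOn.add
      · exact continuousOn_const.mul (fun t ht =>
          (continuousAt_zpow₀ t _ (Or.inl (uIcc_pos one_pos hy ht).ne')).continuousWithinAt)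
      · exact (continuous_finset_sum _ fun i _ =>
          continuous_const.mul (continuous_pow i)).continuousOn
    have key : iterPrim 1 (k+1) (fun t => t ^ (-(q:ℤ))) y = G y - G 1 := by
      show (∫ t in (1:ℝ)..y, iterPrim 1 k (fun t => t ^ (-(q:ℤ))) t) = _
      rw [intervalIntegral.integral_congr (g := F)
        (fun t ht => hb t (uIcc_pos one_pos hy ht))]
      exact intervalIntegral.integral_eq_sub_of_hasDerivAt hderiv hint
    rw [key, hG]
    simp only [one_zpow, one_pow, mul_one]
    rw [hmq']
    rw [Finset.sum_range_succ']
    simp only [ratCons_zero, ratCons_succ, pow_zero, mul_one]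
    have hA' : ((((-1:ℚ))^(k+1) * ((q-1-(k+1)).factorial : ℚ) / ((q-1).factorial : ℚ)) : ℚ)
        = A / (-(m:ℚ)) := by
      rw [hA]
      obtain ⟨m', hm'⟩ : ∃ m', m = m' + 1 := ⟨m - 1, by omega⟩
      have h2 : q - 1 - (k+1) = m' := by omega
      have h3 : q - 1 - k = m' + 1 := by omega
      rw [h2, hm', Nat.factorial_succ]
      have h4 : (((m'+1:ℕ)):ℚ) ≠ 0 := by positivity
      have h5 : (((q-1).factorial : ℚ)) ≠ 0 := Nat.cast_ne_zero.mpr (Nat.factorial_ne_zero _)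
      rw [div_div]
      rw [div_eq_div_iff h5 (by exact mul_ne_zero h5 (neg_ne_zero.mpr h4))]
      push_cast
      ring
    rw [hA']
    rw [hc0]
    push_cast
    ring

lemma stage2 (q : ℕ) (hq : 1 ≤ q) :
    ∀ k, q ≤ k →
    ∃ b : ℕ → ℚ, ∀ y : ℝ, 0 < y →
      iterPrim 1 k (fun t => t ^ (-(q:ℤ))) y =
        ((((-1)^(q-1) / (((q-1).factorial : ℚ) * ((k-q).factorial : ℚ))) : ℚ) : ℝ)
            * y ^ (k - q) * Real.log y
          + ∑ i ∈ Finset.range k, (b i : ℝ) * y ^ i := by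
  intro k hk
  induction k, hk using Nat.le_induction with
  | base =>
    obtain ⟨b, hb⟩ := stage1 q hq (q-1) le_rfl
    set A : ℚ := (-1)^(q-1) * ((q-1-(q-1)).factorial : ℚ) / ((q-1).factorial : ℚ) with hA
    set c0 : ℚ := -(∑ i ∈ Finset.range (q-1), b i / (i+1)) with hc0
    refine ⟨ratCons c0 (fun i => b i / (i+1)), fun y hy => ?_⟩
    have hexp : -((q:ℤ) - ((q-1:ℕ):ℤ)) = -1 := by omega
    set G : ℝ → ℝ := fun t => (A:ℝ) * Real.log t
        + ∑ i ∈ Finset.range (q-1), (b i:ℝ)/((i:ℝ)+1) * t^(i+1) with hG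
    set F : ℝ → ℝ := fun t => (A:ℝ) * t ^ (-((q:ℤ) - ((q-1:ℕ):ℤ)))
        + ∑ i ∈ Finset.range (q-1), (b i : ℝ) * t ^ i with hF
    have hderiv : ∀ t ∈ Set.uIcc (1:ℝ) y, HasDerivAt G (F t) t := by
      intro t ht
      have ht0 : 0 < t := uIcc_pos one_pos hy ht
      have h1 : HasDerivAt (fun t : ℝ => (A:ℝ) * Real.log t)
          ((A:ℝ) * t ^ (-((q:ℤ) - ((q-1:ℕ):ℤ)))) t := by
        have h := (Real.hasDerivAt_log ht0.ne').const_mul (A:ℝ)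
        refine h.congr_deriv ?_
        rw [hexp, zpow_neg_one]
      have h2 : HasDerivAt (fun t : ℝ => ∑ i ∈ Finset.range (q-1), (b i:ℝ)/((i:ℝ)+1) * t^(i+1))
          (∑ i ∈ Finset.range (q-1), (b i : ℝ) * t ^ i) t := by
        refine HasDerivAt.fun_sum fun i _ => ?_
        have h := (hasDerivAt_pow (i+1) t).const_mul ((b i:ℝ)/((i:ℝ)+1))
        refine h.congr_deriv ?_
        have : ((i:ℝ)+1) ≠ 0 := by positivity
        push_cast
        field_simp
      exact h1.add h2
    have hint : IntervalIntegrable F MeasureTheory.volume 1 y := by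
      apply ContinuousOn.intervalIntegrable
      apply ContinuousOn.add
      · exact continuousOn_const.mul (fun t ht =>
          (continuousAt_zpow₀ t _ (Or.inl (uIcc_pos one_pos hy ht).ne')).continuousWithinAt)
      · exact (continuous_finset_sum _ fun i _ =>
          continuous_const.mul (continuous_pow i)).continuousOn
    have hq1 : q - 1 + 1 = q := by omega
    have key : iterPrim 1 ((q-1)+1) (fun t => t ^ (-(q:ℤ))) y = G y - G 1 := by
      show (∫ t in (1:ℝ)..y, iterPrim 1 (q-1) (fun t => t ^ (-(q:ℤ))) t) = _
      rw [intervalIntegral.integral_congr (g := F)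
        (fun t ht => hb t (uIcc_pos one_pos hy ht))]
      exact intervalIntegral.integral_eq_sub_of_hasDerivAt hderiv hint
    rw [hq1] at key
    rw [key, hG]
    simp only [Real.log_one, one_pow, mul_one, mul_zero]
    have hAq : (((-1:ℚ))^(q-1) / (((q-1).factorial : ℚ) * ((q-q).factorial : ℚ))) = A := by
      rw [hA]
      have : q - 1 - (q-1) = 0 := by omega
      have h0 : q - q = 0 := by omega
      rw [this, h0]
      simp [Nat.factorial]
    rw [hAq, show q - q = 0 by omega, pow_zero]
    rw [show Finset.range q = Finset.range ((q-1)+1) by rw [hq1], Finset.sum_range_succ']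
    simp only [ratCons_zero, ratCons_succ, pow_zero, mul_one]
    rw [hc0]
    push_cast
    ring
  | succ k hk ih =>
    obtain ⟨b, hb⟩ := ih
    set C : ℚ := (-1)^(q-1) / (((q-1).factorial : ℚ) * ((k-q).factorial : ℚ)) with hC
    set m : ℕ := k - q with hm
    have hm1 : m + 1 ≤ k := by omega
    have hmk : k + 1 - q = m + 1 := by omega
    have hm0 : (((m:ℚ))+1) ≠ 0 := by positivity
    set c0 : ℚ := C/((m:ℚ)+1)^2 - (∑ i ∈ Finset.range k, b i / (i+1)) with hc0
    refine ⟨fun j => ratCons c0 (fun i => b i / (i+1)) j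
      + (if j = m+1 then -(C/((m:ℚ)+1)^2) else 0), fun y hy => ?_⟩
    set G : ℝ → ℝ := fun t => (C:ℝ)/((m:ℝ)+1) * (t^(m+1) * Real.log t)
        - (C:ℝ)/(((m:ℝ)+1)^2) * t^(m+1)
        + ∑ i ∈ Finset.range k, (b i:ℝ)/((i:ℝ)+1) * t^(i+1) with hG
    set F : ℝ → ℝ := fun t => (C:ℝ) * t ^ (k - q) * Real.log t
        + ∑ i ∈ Finset.range k, (b i : ℝ) * t ^ i with hF
    have hderiv : ∀ t ∈ Set.uIcc (1:ℝ) y, HasDerivAt G (F t) t := by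
      intro t ht
      have ht0 : 0 < t := uIcc_pos one_pos hy ht
      have h1 : HasDerivAt (fun t : ℝ => t^(m+1) * Real.log t)
          (((m:ℝ)+1) * t^m * Real.log t + t^m) t := by
        have h := (hasDerivAt_pow (m+1) t).mul (Real.hasDerivAt_log ht0.ne')
        refine h.congr_deriv ?_
        rw [Nat.add_sub_cancel, pow_succ, mul_assoc (t^m) t t⁻¹, mul_inv_cancel₀ ht0.ne',
          mul_one]
        push_cast
        ring
      have h2 : HasDerivAt (fun t : ℝ => ∑ i ∈ Finset.range k, (b i:ℝ)/((i:ℝ)+1) * t^(i+1))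
          (∑ i ∈ Finset.range k, (b i : ℝ) * t ^ i) t := by
        refine HasDerivAt.fun_sum fun i _ => ?_
        have h := (hasDerivAt_pow (i+1) t).const_mul ((b i:ℝ)/((i:ℝ)+1))
        refine h.congr_deriv ?_
        have : ((i:ℝ)+1) ≠ 0 := by positivity
        push_cast
        field_simp
      have h3 := ((h1.const_mul ((C:ℝ)/((m:ℝ)+1))).sub
        ((hasDerivAt_pow (m+1) t).const_mul ((C:ℝ)/(((m:ℝ)+1)^2)))).add h2
      refine h3.congr_deriv ?_
      have hm0' : ((m:ℝ)+1) ≠ 0 := by positivity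
      simp only [hF, ← hm, Nat.add_sub_cancel]
      push_cast
      field_simp
      ring
    have hint : IntervalIntegrable F MeasureTheory.volume 1 y := by
      apply ContinuousOn.intervalIntegrable
      apply ContinuousOn.add
      · exact ((continuous_const.mul (continuous_pow (k-q))).continuousOn.mul
          (Real.continuousOn_log.mono (fun t ht => (uIcc_pos one_pos hy ht).ne')))
      · exact (continuous_finset_sum _ fun i _ =>
          continuous_const.mul (continuous_pow i)).continuousOn
    have key : iterPrim 1 (k+1) (fun t => t ^ (-(q:ℤ))) y = G y - G 1 := by
      show (∫ t in (1:ℝ)..y, iterPrim 1 k (fun t => t ^ (-(q:ℤ))) t) = _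
      rw [intervalIntegral.integral_congr (g := F)
        (fun t ht => hb t (uIcc_pos one_pos hy ht))]
      exact intervalIntegral.integral_eq_sub_of_hasDerivAt hderiv hint
    rw [key, hG]
    simp only [Real.log_one, one_pow, mul_one, mul_zero, mul_one, sub_zero, zero_sub]
    have hCq : (((-1:ℚ))^(q-1) / (((q-1).factorial : ℚ) * ((k+1-q).factorial : ℚ)))
        = C / ((m:ℚ)+1) := by
      rw [hC, hmk, Nat.factorial_succ, div_div]
      have h5 : (((q-1).factorial : ℚ)) ≠ 0 := Nat.cast_ne_zero.mpr (Nat.factorial_ne_zero _)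
      have h6 : ((m.factorial : ℚ)) ≠ 0 := Nat.cast_ne_zero.mpr (Nat.factorial_ne_zero _)
      rw [div_eq_div_iff (by positivity) (by positivity)]
      push_cast
      ring
    rw [hCq, hmk]
    -- split the sum of the new coefficients
    have hsplit : ∑ i ∈ Finset.range (k+1),
        ((ratCons c0 (fun i => b i / (i+1)) i
          + (if i = m+1 then -(C/((m:ℚ)+1)^2) else 0) : ℚ) : ℝ) * y ^ i
        = (∑ i ∈ Finset.range (k+1), ((ratCons c0 (fun i => b i / (i+1)) i : ℚ) : ℝ) * y ^ i)
          + (-(C:ℝ)/(((m:ℝ)+1)^2)) * y ^ (m+1) := by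
      rw [Finset.sum_congr rfl (fun i _ => by push_cast; ring :
        ∀ i ∈ Finset.range (k+1), ((ratCons c0 (fun i => b i / (i+1)) i
          + (if i = m+1 then -(C/((m:ℚ)+1)^2) else 0) : ℚ) : ℝ) * y ^ i
          = ((ratCons c0 (fun i => b i / (i+1)) i : ℚ):ℝ) * y ^ i
            + ((if i = m+1 then -(C/((m:ℚ)+1)^2) else 0 : ℚ):ℝ) * y ^ i)]
      rw [Finset.sum_add_distrib]
      congr 1
      rw [Finset.sum_congr rfl (fun i _ => by split <;> push_cast <;> ring :
        ∀ i ∈ Finset.range (k+1), ((if i = m+1 then -(C/((m:ℚ)+1)^2) else 0 : ℚ):ℝ) * y ^ i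
          = if i = m+1 then (-(C:ℝ)/(((m:ℝ)+1)^2)) * y ^ i else 0)]
      rw [Finset.sum_ite_eq' (Finset.range (k+1)) (m+1)
        (fun i => (-(C:ℝ)/(((m:ℝ)+1)^2)) * y ^ i)]
      rw [if_pos (Finset.mem_range.mpr (by omega))]
    rw [hsplit]
    rw [Finset.sum_range_succ']
    simp only [ratCons_zero, ratCons_succ, pow_zero, mul_one]
    rw [hc0]
    push_cast
    ring

lemma basis_change (N : ℕ) (b : ℕ → ℚ) (y : ℝ) :
    ∑ i ∈ Finset.range N, (b i : ℝ) * y ^ i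
      = ∑ j ∈ Finset.range N,
          ((((-1:ℚ))^j * ∑ i ∈ Finset.range N, b i * (i.choose j : ℚ) : ℚ) : ℝ) * (1 - y)^j := by
  have step : ∀ i ∈ Finset.range N, (b i : ℝ) * y ^ i
      = ∑ j ∈ Finset.range N, (b i : ℝ) * ((-(1-y))^j * (i.choose j : ℝ)) := by
    intro i hi
    have h1 : (b i : ℝ) * y ^ i = (b i:ℝ) * (-(1-y) + 1)^i := by ring_nf
    rw [h1, add_pow, Finset.mul_sum]
    rw [Finset.sum_congr rfl (fun j _ => by rw [one_pow] :
      ∀ j ∈ Finset.range (i+1), (b i:ℝ) * ((-(1-y))^j * (1:ℝ)^(i-j) * (i.choose j : ℝ))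
        = (b i:ℝ) * ((-(1-y))^j * 1 * (i.choose j : ℝ)))]
    rw [Finset.sum_congr rfl (fun j _ => by ring :
      ∀ j ∈ Finset.range (i+1), (b i:ℝ) * ((-(1-y))^j * 1 * (i.choose j : ℝ))
        = (b i:ℝ) * ((-(1-y))^j * (i.choose j : ℝ)))]
    apply Finset.sum_subset (Finset.range_subset_range.mpr (Finset.mem_range.mp hi))
    intro j hj hj'
    have : i.choose j = 0 := Nat.choose_eq_zero_of_lt (by
      simp only [Finset.mem_range] at hj hj' ⊢; omega)
    simp [this]
  rw [Finset.sum_congr rfl step, Finset.sum_comm]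
  apply Finset.sum_congr rfl
  intro j _
  push_cast
  rw [Finset.mul_sum, Finset.sum_mul]
  apply Finset.sum_congr rfl
  intro i _
  rw [neg_pow (1-y) j]
  ring

/-- Lemma B.6, eq. (B.10): for integer `q` in the supercritical range `N ≥ q ≥ 1`, the
`N`-fold iterated primitive of `t^(−q)` based at `x₀` produces a logarithm with the stated
explicit coefficient, up to a polynomial in `1 − x/x₀` with rational coefficients
depending only on `N` and `q`. -/
theorem iterated_primitive_int_power_log (q N : ℕ) (hq : 1 ≤ q) (hqN : q ≤ N) :
    ∃ d : ℕ → ℚ, ∀ x₀ : ℝ, 0 < x₀ → ∀ x : ℝ, 0 < x →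
      (-1 : ℝ) ^ N * iterPrim x₀ N (fun t => t ^ (-(q : ℝ))) x =
        (-1 : ℝ) ^ (N + 1 - q) /
            ((Nat.factorial (q - 1) : ℝ) * (Nat.factorial (N - q) : ℝ)) *
            x ^ (N - q) * Real.log (x / x₀) -
          x₀ ^ (N - q) * ∑ i ∈ Finset.range N, (d i : ℝ) * (1 - x / x₀) ^ i := by
  obtain ⟨b, hb⟩ := stage2 q hq N hqN
  set C : ℚ := (-1)^(q-1) / (((q-1).factorial : ℚ) * ((N-q).factorial : ℚ)) with hC
  set e : ℕ → ℚ := fun j => (-1)^j * ∑ i ∈ Finset.range N, b i * (i.choose j : ℚ) with he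
  refine ⟨fun j => (-1)^(N+1) * e j, fun x₀ hx₀ x hx => ?_⟩
  have hfun : (fun t:ℝ => t ^ (-(q:ℝ))) = (fun t:ℝ => t ^ (-(q:ℤ))) := by
    funext t
    rw [← Real.rpow_intCast t (-(q:ℤ))]
    norm_num
  rw [hfun, iterPrim_scale q hx₀ N x hx]
  have hy : 0 < x / x₀ := div_pos hx hx₀
  have hz : x₀ ^ ((N:ℤ) - (q:ℤ)) = x₀ ^ (N - q : ℕ) := by
    rw [show (N:ℤ) - (q:ℤ) = ((N - q : ℕ) : ℤ) by omega, zpow_natCast]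
  rw [hz, hb (x/x₀) hy, basis_change N b (x/x₀)]
  have hxp : x₀ ^ (N-q) * (x/x₀)^(N-q) = x ^ (N-q) := by
    rw [div_pow, mul_div_cancel₀ _ (pow_ne_zero _ hx₀.ne')]
  have hsign : (-1:ℝ)^N * (C:ℝ)
      = (-1:ℝ)^(N+1-q) / (((q-1).factorial:ℝ) * ((N-q).factorial:ℝ)) := by
    rw [hC]
    push_cast
    rw [mul_div_assoc', ← pow_add,
      show N + (q-1) = (N+1-q) + 2*(q-1) by omega, pow_add, pow_mul]
    norm_num
  have hS : ∑ j ∈ Finset.range N, ((((-1:ℚ))^(N+1) * e j : ℚ) : ℝ) * (1 - x/x₀)^j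
      = (-1:ℝ)^(N+1) * ∑ j ∈ Finset.range N, ((e j : ℚ) : ℝ) * (1 - x/x₀)^j := by
    rw [Finset.mul_sum]
    exact Finset.sum_congr rfl fun j _ => by push_cast; ring
  calc (-1:ℝ)^N * (x₀ ^ (N-q) * ((C:ℝ) * (x/x₀)^(N-q) * Real.log (x/x₀)
        + ∑ j ∈ Finset.range N, ((e j : ℚ) : ℝ) * (1 - x/x₀)^j))
      = ((-1:ℝ)^N * (C:ℝ)) * (x₀ ^ (N-q) * (x/x₀)^(N-q)) * Real.log (x/x₀)
        + (-1:ℝ)^N * (x₀ ^ (N-q) * ∑ j ∈ Finset.range N, ((e j : ℚ) : ℝ) * (1 - x/x₀)^j) := by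
        ring
    _ = (-1:ℝ)^(N+1-q) / (((q-1).factorial:ℝ) * ((N-q).factorial:ℝ)) * x ^ (N-q)
          * Real.log (x/x₀)
        - x₀ ^ (N-q) * ((-1:ℝ)^(N+1) * ∑ j ∈ Finset.range N, ((e j : ℚ) : ℝ) * (1 - x/x₀)^j) := by
        rw [hsign, hxp, pow_succ]
        ring
    _ = (-1 : ℝ) ^ (N + 1 - q) /
            ((Nat.factorial (q - 1) : ℝ) * (Nat.factorial (N - q) : ℝ)) *
            x ^ (N - q) * Real.log (x / x₀) -
          x₀ ^ (N - q) * ∑ i ∈ Finset.range N, ((((-1:ℚ))^(N+1) * e i : ℚ) : ℝ)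
            * (1 - x / x₀) ^ i := by
        rw [hS]
end
end

section
/- For all real numbers u < 0 < v, the improper integral ∫_{−∞}^{u} ( log(v−t) − log(−t) ) / (v−t) dt converges, and its value equals the convergent series Σ_{k=1}^{∞} (1/k²) · ( v/(v−u) )^k (note that 0 < v/(v−u) < 1); in other words it equals the dilogarithm Li₂( v/(v−u) ). (This is the exact identity established in the proof of Lemma B.4, via the substitution x′ = v/(v−t) and the identity Σ_{k≥1} x^k/k² = −∫₀ˣ log(1−x′)/x′ dx′; the lemma's conclusion ∫_{−∞}^{u} (log r − log r₀)/r du′ = 1 + O(r₀/r) follows from it.) -/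
open MeasureTheory

/-- The exact identity established in the proof of Lemma B.4: for `u < 0 < v`, the
improper integral `∫_{−∞}^{u} (log(v−t) − log(−t))/(v−t) dt` converges and equals the
convergent series `Σ_{k=1}^{∞} (1/k²) (v/(v−u))^k`, i.e. the dilogarithm
`Li₂(v/(v−u))`. -/
theorem dilogarithm_integral_identity (u v : ℝ) (hu : u < 0) (hv : 0 < v) :
    IntegrableOn (fun t => (Real.log (v - t) - Real.log (-t)) / (v - t)) (Set.Iic u) volume ∧
      Summable (fun k : ℕ => 1 / ((k : ℝ) + 1) ^ 2 * (v / (v - u)) ^ (k + 1)) ∧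
      ∫ t in Set.Iic u, (Real.log (v - t) - Real.log (-t)) / (v - t) =
        ∑' k : ℕ, 1 / ((k : ℝ) + 1) ^ 2 * (v / (v - u)) ^ (k + 1) := by
  have hvu : (0:ℝ) < v - u := by linarith
  set b : ℝ := v / (v - u) with hbdef
  have hb0 : 0 < b := div_pos hv hvu
  have hb1 : b < 1 := (div_lt_one hvu).mpr (by linarith)
  set g : ℝ → ℝ := fun x => v - v / x with hg
  set s : Set ℝ := Set.Ioc 0 b with hs
  have hmeas : MeasurableSet s := measurableSet_Ioc
  -- derivative of g
  have hderiv : ∀ x ∈ s, HasDerivWithinAt g (v / x ^ 2) s x := by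
    intro x hx
    have hx0 : x ≠ 0 := ne_of_gt hx.1
    have h1 : HasDerivAt g (-(v * -(x ^ 2)⁻¹)) x := by
      simpa [hg, div_eq_mul_inv] using ((hasDerivAt_inv hx0).const_mul v).const_sub v
    have h2 : -(v * -(x ^ 2)⁻¹) = v / x ^ 2 := by field_simp
    exact (h2 ▸ h1).hasDerivWithinAt
  -- injectivity of g on s
  have hinj : Set.InjOn g s := by
    intro x hx y hy h
    have hx0 : x ≠ 0 := ne_of_gt hx.1
    have hy0 : y ≠ 0 := ne_of_gt hy.1
    have h' : v / x = v / y := by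
      have : v - v / x = v - v / y := h
      linarith
    rw [div_eq_div_iff hx0 hy0] at h'
    exact (mul_left_cancel₀ (ne_of_gt hv) (by linarith : v * y = v * x)).symm
  -- image of s under g
  have himg : g '' s = Set.Iic u := by
    ext y
    simp only [Set.mem_image, Set.mem_Iic, hs, Set.mem_Ioc]
    constructor
    · rintro ⟨x, ⟨hx0, hxb⟩, rfl⟩
      have hvb : v / b = v - u := by
        rw [hbdef]; field_simp
      have h1 : v / b ≤ v / x := div_le_div_of_nonneg_left hv.le hx0 hxb
      simp only [hg]
      rw [hvb] at h1
      linarith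
    · intro hy
      refine ⟨v / (v - y), ⟨div_pos hv (by linarith), ?_⟩, ?_⟩
      · rw [hbdef]
        exact div_le_div_of_nonneg_left hv.le hvu (by linarith)
      · have hvy : v - y ≠ 0 := ne_of_gt (by linarith)
        simp only [hg]
        field_simp
        ring
  -- pointwise identity for the transformed integrand
  have key : ∀ x ∈ s,
      |v / x ^ 2| • ((Real.log (v - g x) - Real.log (-(g x))) / (v - g x))
        = -Real.log (1 - x) / x := by
    intro x hx
    have hx0 : 0 < x := hx.1
    have hx1 : x < 1 := lt_of_le_of_lt hx.2 hb1
    have h1x : 0 < 1 - x := by linarith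
    have hvg : v - g x = v / x := by simp only [hg]; ring
    have hng : -(g x) = v * (1 - x) / x := by simp only [hg]; field_simp; ring
    rw [hvg, hng]
    have hlog1 : Real.log (v / x) = Real.log v - Real.log x :=
      Real.log_div (ne_of_gt hv) (ne_of_gt hx0)
    have hlog2 : Real.log (v * (1 - x) / x)
        = Real.log v + Real.log (1 - x) - Real.log x := by
      rw [Real.log_div (by positivity) (ne_of_gt hx0),
        Real.log_mul (ne_of_gt hv) (ne_of_gt h1x)]
    rw [hlog1, hlog2, abs_of_pos (by positivity : (0:ℝ) < v / x ^ 2)]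
    have : Real.log v - Real.log x - (Real.log v + Real.log (1 - x) - Real.log x)
        = -Real.log (1 - x) := by ring
    rw [this, smul_eq_mul]
    field_simp
  -- the series expansion pointwise on s
  have hps : ∀ x ∈ s, HasSum (fun k : ℕ => x ^ k / ((k : ℝ) + 1))
      (-Real.log (1 - x) / x) := by
    intro x hx
    have hx0 : (0:ℝ) < x := hx.1
    have hxabs : |x| < 1 := by
      rw [abs_of_pos hx0]; exact lt_of_le_of_lt hx.2 hb1
    have h := (Real.hasSum_pow_div_log_of_abs_lt_one hxabs).div_const x
    have heq : (fun n : ℕ => x ^ (n + 1) / (↑n + 1) / x)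
        = fun n : ℕ => x ^ n / ((n : ℝ) + 1) := by
      funext n
      rw [pow_succ]
      field_simp
    rwa [heq] at h
  -- integrability of each term
  have hFint : ∀ k : ℕ, Integrable (fun x => x ^ k / ((k : ℝ) + 1))
      (volume.restrict s) := by
    intro k
    have : Continuous fun x : ℝ => x ^ k / ((k : ℝ) + 1) := by
      continuity
    exact (this.integrableOn_Ioc (a := 0) (b := b))
  -- value of each term integral
  have hkpos : ∀ k : ℕ, (0:ℝ) < (k : ℝ) + 1 := fun k => by positivity
  have hFval : ∀ k : ℕ, ∫ x in s, x ^ k / ((k : ℝ) + 1)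
      = 1 / ((k : ℝ) + 1) ^ 2 * b ^ (k + 1) := by
    intro k
    rw [hs, ← intervalIntegral.integral_of_le hb0.le]
    rw [intervalIntegral.integral_div, integral_pow]
    field_simp
    ring
  -- the norm integrals
  have hFnorm : ∀ k : ℕ, ∫ x in s, ‖x ^ k / ((k : ℝ) + 1)‖
      = 1 / ((k : ℝ) + 1) ^ 2 * b ^ (k + 1) := by
    intro k
    rw [← hFval k]
    apply setIntegral_congr_fun hmeas
    intro x hx
    have hx0 : (0:ℝ) < x := hx.1
    show ‖x ^ k / ((k : ℝ) + 1)‖ = x ^ k / ((k : ℝ) + 1)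
    rw [Real.norm_eq_abs, abs_of_nonneg (by positivity)]
  -- summability of the target series
  have hsum : Summable (fun k : ℕ => 1 / ((k : ℝ) + 1) ^ 2 * b ^ (k + 1)) := by
    apply Summable.of_nonneg_of_le (fun k => by positivity)
      (fun k => ?_) ((summable_geometric_of_lt_one hb0.le hb1).mul_left b)
    have h1 : 1 / ((k : ℝ) + 1) ^ 2 ≤ 1 := by
      rw [div_le_one (by positivity)]
      nlinarith [hkpos k]
    calc 1 / ((k : ℝ) + 1) ^ 2 * b ^ (k + 1) ≤ 1 * b ^ (k + 1) := by
          apply mul_le_mul_of_nonneg_right h1 (by positivity)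
      _ = b * b ^ k := by rw [one_mul, pow_succ]; ring
  -- the key HasSum for integrals
  have hHasSum : HasSum (fun k : ℕ => ∫ x in s, x ^ k / ((k : ℝ) + 1))
      (∫ x in s, ∑' k : ℕ, x ^ k / ((k : ℝ) + 1)) := by
    apply hasSum_integral_of_summable_integral_norm hFint
    apply Summable.congr hsum
    intro k
    exact (hFnorm k).symm
  -- the tsum equals -log(1-x)/x on s
  have htsum_eq : ∀ x ∈ s, (∑' k : ℕ, x ^ k / ((k : ℝ) + 1)) = -Real.log (1 - x) / x :=
    fun x hx => (hps x hx).tsum_eq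
  -- integrability of -log(1-x)/x on s
  have hint_log : IntegrableOn (fun x => -Real.log (1 - x) / x) s volume := by
    apply Measure.integrableOn_of_bounded (M := (1 - b)⁻¹) measure_Ioc_lt_top.ne
    · apply Measurable.aestronglyMeasurable
      exact ((Real.measurable_log.comp (measurable_const.sub measurable_id)).neg.div
        measurable_id)
    · filter_upwards [ae_restrict_mem hmeas] with x hx
      have hx0 : (0:ℝ) < x := hx.1
      have hx1 : x < 1 := lt_of_le_of_lt hx.2 hb1
      have h1x : (0:ℝ) < 1 - x := by linarith
      have h1b : (0:ℝ) < 1 - b := by linarith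
      have hlogn : Real.log (1 - x) ≤ 0 := Real.log_nonpos (by linarith) (by linarith)
      have hle : -Real.log (1 - x) ≤ x / (1 - x) := by
        have h := Real.log_le_sub_one_of_pos (inv_pos.mpr h1x)
        rw [Real.log_inv] at h
        have h2 : (1 - x)⁻¹ - 1 = x / (1 - x) := by field_simp; ring
        linarith [h2 ▸ h]
      have hxb : x ≤ b := hx.2
      rw [Real.norm_eq_abs,
        abs_of_nonneg (div_nonneg (by linarith) hx0.le)]
      calc -Real.log (1 - x) / x ≤ (x / (1 - x)) / x := by gcongr
        _ = (1 - x)⁻¹ := by field_simp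
        _ ≤ (1 - b)⁻¹ := by
            apply inv_anti₀ h1b (by linarith)
  -- integrability of the original integrand
  have hintmain : IntegrableOn (fun t => (Real.log (v - t) - Real.log (-t)) / (v - t))
      (Set.Iic u) volume := by
    rw [← himg, integrableOn_image_iff_integrableOn_abs_deriv_smul hmeas hderiv hinj]
    apply hint_log.congr_fun _ hmeas
    intro x hx
    exact (key x hx).symm
  refine ⟨hintmain, hsum, ?_⟩
  have step1 : ∫ t in Set.Iic u, (Real.log (v - t) - Real.log (-t)) / (v - t)
      = ∫ x in s, -Real.log (1 - x) / x := by
    rw [← himg, integral_image_eq_integral_abs_deriv_smul hmeas hderiv hinj]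
    exact setIntegral_congr_fun hmeas key
  have step2 : ∫ x in s, -Real.log (1 - x) / x
      = ∫ x in s, ∑' k : ℕ, x ^ k / ((k : ℝ) + 1) := by
    apply setIntegral_congr_fun hmeas
    intro x hx
    exact (htsum_eq x hx).symm
  rw [step1, step2, ← hHasSum.tsum_eq]
  exact tsum_congr hFval
end
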